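/- arXiv:2205.09268 — 2 statements merged into one kernel-verified Lean document; each statement's English description precedes it below -/
import Mathlib

section
/- For the Grover state |ψ_t⟩ = cos θ_t |χ₀⟩ + sin θ_t |χ₁⟩ in the N-dimensional computational basis (with |χ₀⟩, |χ₁⟩ uniform superpositions over N−M non-targets and M targets), the l₁-norm of coherence equals C_l(t) = (√M sin θ_t + √(N−M) cos θ_t)² − 1. -/
open Real Finset

/-- For the Grover state `ψ_t = cos θ_t χ₀ + sin θ_t χ₁` in the `N`-dimensional
computational basis (targets the first `M` indices), the `l₁`-norm of coherence of
`ρ = |ψ_t⟩⟨ψ_t|` equals `(√M sin θ_t + √(N−M) cos θ_t)² − 1`. -/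
theorem l1_coherence_grover_state
    (N M : ℕ) (hM : 1 ≤ M) (hMN : M < N)
    (θ : ℝ) (hθ : θ ∈ Set.Icc 0 (Real.pi / 2))
    (ψ : Fin N → ℝ)
    (hψ : ∀ i : Fin N, ψ i =
      if (i : ℕ) < M then Real.sin θ / Real.sqrt M
      else Real.cos θ / Real.sqrt ((N : ℝ) - M)) :
    (∑ i : Fin N, ∑ j : Fin N, if i ≠ j then |ψ i * ψ j| else 0) =
      (Real.sqrt M * Real.sin θ + Real.sqrt ((N : ℝ) - M) * Real.cos θ) ^ 2 - 1 := by
  obtain ⟨hθ0, hθ1⟩ := hθ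
  have hpi := Real.pi_pos
  have hsin : 0 ≤ Real.sin θ :=
    Real.sin_nonneg_of_nonneg_of_le_pi hθ0 (by linarith)
  have hcos : 0 ≤ Real.cos θ :=
    Real.cos_nonneg_of_mem_Icc ⟨by linarith, hθ1⟩
  have hM' : (0:ℝ) < (M:ℝ) := by exact_mod_cast Nat.lt_of_lt_of_le Nat.zero_lt_one hM
  have hNM : (0:ℝ) < (N:ℝ) - (M:ℝ) := by
    have : (M:ℝ) < (N:ℝ) := by exact_mod_cast hMN
    linarith
  set a : ℝ := Real.sin θ / Real.sqrt M with ha_def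
  set b : ℝ := Real.cos θ / Real.sqrt ((N:ℝ) - M) with hb_def
  have ha : 0 ≤ a := div_nonneg hsin (Real.sqrt_nonneg _)
  have hb : 0 ≤ b := div_nonneg hcos (Real.sqrt_nonneg _)
  -- sums of |ψ| and ψ²
  have habs : ∀ i : Fin N, |ψ i| = ψ i := fun i => by
    rw [hψ i]; split <;> simp [abs_of_nonneg, ha, hb]
  have hsplit : ∀ (f : ℕ → ℝ),
      (∑ i : Fin N, f (if (i:ℕ) < M then 0 else 1)) =
        (M:ℝ) * f 0 + ((N:ℝ) - M) * f 1 := by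
    intro f
    rw [Fin.sum_univ_eq_sum_range (fun i => f (if i < M then 0 else 1)) N,
      ← Finset.sum_range_add_sum_Ico _ hMN.le]
    rw [Finset.sum_congr rfl (fun x hx => congrArg f (if_pos (Finset.mem_range.mp hx))),
        Finset.sum_congr rfl (fun x hx => congrArg f (if_neg (not_lt.mpr (Finset.mem_Ico.mp hx).1)))]
    rw [Finset.sum_const, Finset.sum_const, Finset.card_range, Nat.card_Ico]
    rw [nsmul_eq_mul, nsmul_eq_mul, Nat.cast_sub hMN.le]
  have hS : (∑ i : Fin N, ψ i) =
      Real.sqrt M * Real.sin θ + Real.sqrt ((N:ℝ) - M) * Real.cos θ := by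
    have := hsplit (fun k => if k = 0 then a else b)
    simp only at this
    calc (∑ i : Fin N, ψ i)
        = ∑ i : Fin N, (fun k => if k = 0 then a else b) (if (i:ℕ) < M then 0 else 1) := by
          refine Finset.sum_congr rfl fun i _ => ?_
          rw [hψ i]; split <;> simp
      _ = (M:ℝ) * a + ((N:ℝ) - M) * b := this
      _ = Real.sqrt M * Real.sin θ + Real.sqrt ((N:ℝ) - M) * Real.cos θ := by
          rw [ha_def, hb_def]
          have h1 : (M:ℝ) * (Real.sin θ / Real.sqrt M) =
              Real.sin θ * ((M:ℝ) / Real.sqrt M) := by ring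
          have h2 : ((N:ℝ) - M) * (Real.cos θ / Real.sqrt ((N:ℝ) - M)) =
              Real.cos θ * (((N:ℝ) - M) / Real.sqrt ((N:ℝ) - M)) := by ring
          rw [h1, h2, Real.div_sqrt, Real.div_sqrt]; ring
  have hsq : (∑ i : Fin N, ψ i ^ 2) = 1 := by
    have := hsplit (fun k => (if k = 0 then a else b) ^ 2)
    simp only at this
    calc (∑ i : Fin N, ψ i ^ 2)
        = ∑ i : Fin N, (fun k => (if k = 0 then a else b) ^ 2) (if (i:ℕ) < M then 0 else 1) := by
          refine Finset.sum_congr rfl fun i _ => ?_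
          rw [hψ i]; split <;> simp
      _ = (M:ℝ) * a ^ 2 + ((N:ℝ) - M) * b ^ 2 := this
      _ = 1 := by
          rw [ha_def, hb_def, div_pow, div_pow, Real.sq_sqrt hM'.le,
            Real.sq_sqrt hNM.le]
          have h3 : Real.sin θ ^ 2 + Real.cos θ ^ 2 = 1 := Real.sin_sq_add_cos_sq θ
          field_simp
          exact h3
  -- main computation
  have key : ∀ i : Fin N, (∑ j : Fin N, if i ≠ j then |ψ i * ψ j| else 0) =
      ψ i * (∑ j : Fin N, ψ j) - ψ i ^ 2 := by
    intro i
    have : ∀ j : Fin N, (if i ≠ j then |ψ i * ψ j| else 0) =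
        ψ i * ψ j - (if i = j then ψ i * ψ j else 0) := by
      intro j
      by_cases h : i = j
      · simp [h]
      · simp [h, abs_mul, habs]
    rw [Finset.sum_congr rfl fun j _ => this j, Finset.sum_sub_distrib,
      ← Finset.mul_sum, Finset.sum_ite_eq Finset.univ i (fun j => ψ i * ψ j)]
    simp [sq]
  rw [Finset.sum_congr rfl fun i _ => key i, Finset.sum_sub_distrib,
    ← Finset.sum_mul, hS, hsq]
  ring
end

section
/- Fix M ≥ 1 and t, and let θ_N = 2 arcsin√(M/N), P_N = sin²((2t+1)θ_N/2). Then the normalized relative-entropy coherence 𝒩(C_e) = C_e/ln(N−M), where C_e = P_N ln(M/P_N) + (1−P_N) ln((N−M)/(1−P_N)) − S_N with 0 ≤ S_N ≤ ln 2, satisfies 𝒩(C_e) + P_N → 1 as N → ∞. -/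
open Real Filter

/-- Fix `M ≥ 1` and `t`. With `θ_N = 2 arcsin √(M/N)`,
`P_N = sin²((2t+1)θ_N/2)`, and relative-entropy coherence
`C_N = P_N ln(M/P_N) + (1−P_N) ln((N−M)/(1−P_N)) − S_N` where `0 ≤ S_N ≤ ln 2`,
the normalized coherence `C_N / ln(N−M)` satisfies `P_N + C_N/ln(N−M) → 1` as `N → ∞`. -/
theorem normalized_relative_entropy_coherence_complementarity
    (M : ℕ) (hM : 1 ≤ M) (t : ℕ)
    (S : ℕ → ℝ) (hS : ∀ N : ℕ, S N ∈ Set.Icc 0 (Real.log 2))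
    (θ P C : ℕ → ℝ)
    (hθ : ∀ N : ℕ, θ N = 2 * Real.arcsin (Real.sqrt ((M : ℝ) / N)))
    (hP : ∀ N : ℕ, P N = Real.sin ((2 * t + 1) * θ N / 2) ^ 2)
    (hC : ∀ N : ℕ, C N = P N * Real.log ((M : ℝ) / P N)
        + (1 - P N) * Real.log (((N : ℝ) - M) / (1 - P N)) - S N) :
    Tendsto (fun N : ℕ => P N + C N / Real.log ((N : ℝ) - M)) atTop (nhds 1) := by
  set L : ℕ → ℝ := fun N => Real.log ((N : ℝ) - M) with hL
  set R : ℕ → ℝ := fun N => P N * Real.log ((M : ℝ) / P N)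
      - (1 - P N) * Real.log (1 - P N) - S N with hR
  have hM0 : (0:ℝ) < M := by exact_mod_cast hM
  have hM1 : (1:ℝ) ≤ M := by exact_mod_cast hM
  have hlogM : 0 ≤ Real.log M := Real.log_nonneg hM1
  have hlog2 : 0 ≤ Real.log 2 := Real.log_nonneg one_le_two
  have hPnonneg : ∀ N, 0 ≤ P N := fun N => (hP N) ▸ sq_nonneg _
  have hPle1 : ∀ N, P N ≤ 1 := fun N => (hP N) ▸ Real.sin_sq_le_one _
  have hPlim : Tendsto P atTop (nhds 0) := by
    have h1 : Tendsto (fun N : ℕ => (M : ℝ) / N) atTop (nhds 0) :=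
      tendsto_const_div_atTop_nhds_zero_nat (M : ℝ)
    have hcont : Continuous (fun x : ℝ =>
        Real.sin ((2 * (t:ℝ) + 1) * (2 * Real.arcsin (Real.sqrt x)) / 2) ^ 2) :=
      (Real.continuous_sin.comp (((continuous_const.mul
        (continuous_const.mul (Real.continuous_arcsin.comp Real.continuous_sqrt))).div_const
        2))).pow 2
    have h2 := (hcont.tendsto 0).comp h1
    simp only [Function.comp_def] at h2
    simp only [Real.sqrt_zero, Real.arcsin_zero, mul_zero, zero_div, Real.sin_zero,
      ne_eq, OfNat.ofNat_ne_zero, not_false_eq_true, zero_pow] at h2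
    refine h2.congr fun N => ?_
    rw [hP, hθ]
  have hhalf : ∀ᶠ N in atTop, P N < 1/2 :=
    hPlim.eventually_lt_const (by norm_num)
  have hNbig : ∀ᶠ N in atTop, M + 2 ≤ N := eventually_ge_atTop (M + 2)
  have hLtop : Tendsto L atTop atTop := by
    apply Real.tendsto_log_atTop.comp
    have h : Tendsto (fun N : ℕ => (N : ℝ)) atTop atTop := tendsto_natCast_atTop_atTop
    simpa [sub_eq_add_neg] using tendsto_atTop_add_const_right atTop (-(M:ℝ)) h
  have heq : ∀ᶠ N in atTop, P N + C N / L N = 1 + R N / L N := by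
    filter_upwards [hhalf, hNbig] with N h1 h2
    have hNM : (2:ℝ) ≤ (N:ℝ) - M := by
      have : ((M:ℝ) + 2) ≤ N := by exact_mod_cast h2
      linarith
    have hLpos : 0 < L N := Real.log_pos (by linarith)
    have h1P : (0:ℝ) < 1 - P N := by linarith
    have hClog : C N = (1 - P N) * L N + R N := by
      rw [hC, hR]
      simp only [hL]
      rw [Real.log_div (by linarith) (ne_of_gt h1P)]
      ring
    rw [hClog]
    field_simp
    ring
  have hRL : Tendsto (fun N => R N / L N) atTop (nhds 0) := by
    apply squeeze_zero_norm' (a := fun N => (Real.log M + 2 + Real.log 2) / L N)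
    · filter_upwards [hhalf, hNbig] with N h1 h2
      have hNM : (2:ℝ) ≤ (N:ℝ) - M := by
        have : ((M:ℝ) + 2) ≤ N := by exact_mod_cast h2
        linarith
      have hLpos : 0 < L N := Real.log_pos (by linarith)
      have h1P : (0:ℝ) < 1 - P N := by linarith
      have ha : |P N * Real.log ((M:ℝ) / P N)| ≤ Real.log M + 1 := by
        rcases eq_or_lt_of_le (hPnonneg N) with h0 | h0
        · rw [← h0]
          simp
          linarith
        · rw [Real.log_div (ne_of_gt hM0) (ne_of_gt h0), mul_sub]
          have hb1 : |Real.log (P N) * P N| < 1 :=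
            Real.abs_log_mul_self_lt (P N) h0 (hPle1 N)
          have hb2 : |P N * Real.log M| ≤ Real.log M := by
            rw [abs_of_nonneg (mul_nonneg (hPnonneg N) hlogM)]
            nlinarith [hPle1 N]
          calc |P N * Real.log M - P N * Real.log (P N)|
              ≤ |P N * Real.log M| + |P N * Real.log (P N)| := abs_sub _ _
            _ ≤ Real.log M + 1 := by
                rw [mul_comm (P N) (Real.log (P N))]
                linarith
      have hb : |(1 - P N) * Real.log (1 - P N)| ≤ 1 := by
        rw [mul_comm]
        exact le_of_lt (Real.abs_log_mul_self_lt (1 - P N) h1P (by linarith [hPnonneg N]))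
      have hs : |S N| ≤ Real.log 2 := by
        rcases hS N with ⟨hs1, hs2⟩
        rw [abs_of_nonneg hs1]; exact hs2
      have hRb : |R N| ≤ Real.log M + 2 + Real.log 2 := by
        rw [hR]
        calc |P N * Real.log ((M:ℝ) / P N) - (1 - P N) * Real.log (1 - P N) - S N|
            ≤ |P N * Real.log ((M:ℝ) / P N) - (1 - P N) * Real.log (1 - P N)| + |S N| :=
              abs_sub _ _
          _ ≤ |P N * Real.log ((M:ℝ) / P N)| + |(1 - P N) * Real.log (1 - P N)| + |S N| := by
              linarith [abs_sub (P N * Real.log ((M:ℝ) / P N))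
                ((1 - P N) * Real.log (1 - P N))]
          _ ≤ Real.log M + 2 + Real.log 2 := by linarith
      rw [Real.norm_eq_abs, abs_div, abs_of_pos hLpos]
      gcongr
    · exact tendsto_const_nhds.div_atTop hLtop
  have hfinal : Tendsto (fun N => 1 + R N / L N) atTop (nhds 1) := by
    have := (tendsto_const_nhds (x := (1:ℝ)) (f := atTop)).add hRL
    simpa using this
  exact hfinal.congr' (heq.mono fun N h => h.symm)
end
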